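/- The number of functions r : [n] → [n] whose functional graph has exactly i nodes lying on cycles equals i · n^(n-1-i) · n! / (n-i)!. -/

import Mathlib

open Finset Function

namespace Stmt4Aux

variable {V : Type*} [Fintype V] [DecidableEq V]

lemma reach_transfer {D T : Finset V} (hDT : Disjoint D T) {p q : V → V}
    (hpq : ∀ v ∈ D, p v = q v) (hq : ∀ v ∈ D, q v ∈ D ∪ T) :
    ∀ k, ∀ v ∈ D, q^[k] v ∈ T → ∃ m, p^[m] v ∈ T := by
  intro k
  induction k with
  | zero =>
    intro v hv hT
    exact absurd hT (Finset.disjoint_left.1 hDT hv)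
  | succ k ih =>
    intro v hv hT
    rcases Finset.mem_union.1 (hq v hv) with h | h
    · rw [iterate_succ_apply] at hT
      obtain ⟨m, hm⟩ := ih (q v) h hT
      exact ⟨m + 1, by rw [iterate_succ_apply, hpq v hv]; exact hm⟩
    · exact ⟨1, by simpa [hpq v hv] using h⟩

def Hset (A R : Finset V) : Set (V → V) :=
  {p | (∀ v, v ∉ A → p v = v) ∧ (∀ v ∈ A, p v ∈ A ∪ R) ∧ ∀ v ∈ A, ∃ m, p^[m] v ∈ R}

omit [Fintype V] in
lemma Hset_card_empty (R : Finset V) : Nat.card (Hset (∅ : Finset V) R) = 1 := by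
  rw [Nat.card_eq_one_iff_exists]
  refine ⟨⟨id, fun v _ => rfl, fun v hv => absurd hv (Finset.notMem_empty v),
      fun v hv => absurd hv (Finset.notMem_empty v)⟩, ?_⟩
  rintro ⟨p, hp⟩
  exact Subtype.ext (funext fun v => hp.1 v (Finset.notMem_empty v))

lemma nat_card_sigma {ι : Type*} [Fintype ι] (B : ι → Type*) [∀ i, Finite (B i)] :
    Nat.card (Σ i, B i) = ∑ i, Nat.card (B i) := by
  letI : ∀ i, Fintype (B i) := fun i => Fintype.ofFinite _
  simp [Nat.card_eq_fintype_card]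

lemma binom_deriv (a r : ℕ) (ha : 1 ≤ a) :
    ∑ t ∈ Finset.range (a + 1), a.choose t * t * r ^ t * a ^ (a - t) =
      a * r * (a + r) ^ (a - 1) := by
  obtain ⟨b, rfl⟩ : ∃ b, a = b + 1 := ⟨a - 1, (Nat.succ_pred_eq_of_pos ha).symm⟩
  rw [Finset.sum_range_succ']
  simp only [mul_zero, zero_mul, add_zero]
  have key : ∀ u, (b + 1).choose (u + 1) * (u + 1) = (b + 1) * b.choose u := fun u => by
    rw [← Nat.add_one_mul_choose_eq]
  calc ∑ u ∈ Finset.range (b + 1),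
        (b+1).choose (u+1) * (u+1) * r ^ (u+1) * (b+1) ^ (b + 1 - (u+1))
      = ∑ u ∈ Finset.range (b + 1), (b+1) * r * (r ^ u * (b+1) ^ (b - u) * b.choose u) := by
        refine Finset.sum_congr rfl fun u hu => ?_
        rw [key u, show b + 1 - (u + 1) = b - u by omega, pow_succ]
        ring
    _ = (b+1) * r * ((b+1) + r) ^ (b + 1 - 1) := by
        rw [← Finset.mul_sum, Nat.add_sub_cancel, add_comm (b+1) r, add_pow]
        simp

def G (a r t : ℕ) : ℕ := if t = 0 then 0 else if t = a then r ^ a else r ^ t * (t * a ^ (a - 1 - t))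

lemma key_id (a r : ℕ) (ha : 1 ≤ a) :
    ∑ t ∈ Finset.range (a + 1), a.choose t * G a r t = r * (a + r) ^ (a - 1) := by
  apply Nat.eq_of_mul_eq_mul_left (show 0 < a by omega)
  rw [Finset.mul_sum]
  have hterm : ∀ t ∈ Finset.range (a + 1),
      a * (a.choose t * G a r t) = a.choose t * t * r ^ t * a ^ (a - t) := by
    intro t ht
    rcases eq_or_ne t 0 with rfl | h0
    · simp [G]
    rcases eq_or_ne t a with rfl | ha'
    · simp only [G, if_neg h0, if_pos rfl, Nat.choose_self, Nat.sub_self, pow_zero,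
        eq_self_iff_true, if_true]
      ring
    · have ht' : t < a := by have := Finset.mem_range.1 ht; omega
      simp only [G, if_neg h0, if_neg ha']
      rw [show a ^ (a - t) = a * a ^ (a - 1 - t) by
        rw [← pow_succ']; congr 1; omega]
      ring
  rw [Finset.sum_congr rfl hterm, binom_deriv a r ha]
  ring

/-- glue a function on `S` with a function elsewhere -/
def glue (S : Finset V) (g : {x : V // x ∈ S} → V) (q : V → V) : V → V :=
  fun v => if h : v ∈ S then g ⟨v, h⟩ else q v

theorem Hset_card : ∀ (a : ℕ) (A R : Finset V), A.card = a → Disjoint A R →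
    A.Nonempty → R.Nonempty →
    Nat.card (Hset A R) = R.card * (A.card + R.card) ^ (A.card - 1) := by
  intro a
  induction a using Nat.strong_induction_on with
  | _ a IH =>
  intro A R hAa hd hAne hRne
  classical
  -- the index data: the set of points mapping directly into R, the map there, the rest
  set Idx := {S : Finset V // S ⊆ A ∧ S.Nonempty} with hIdx
  -- the gluing map
  have hglue_mem : ∀ (S : Finset V) (hSA : S ⊆ A)
      (g : {x : V // x ∈ S} → {x : V // x ∈ R}) (q : V → V) (hq : q ∈ Hset (A \ S) S),
      glue S (fun z => (g z : V)) q ∈ Hset A R := by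
    intro S hSA g q hq
    set p := glue S (fun z => (g z : V)) q with hp
    have hout : ∀ v ∈ A \ S, p v = q v := by
      intro v hv
      exact dif_neg (Finset.mem_sdiff.1 hv).2
    have hAS : A \ S ∪ S = A := Finset.sdiff_union_of_subset hSA
    refine ⟨?_, ?_, ?_⟩
    · intro v hv
      have hvS : v ∉ S := fun h => hv (hSA h)
      have hvAS : v ∉ A \ S := fun h => hv (Finset.mem_sdiff.1 h).1
      rw [hp, glue, dif_neg hvS]
      exact hq.1 v hvAS
    · intro v hv
      by_cases h : v ∈ S
      · rw [hp, glue, dif_pos h]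
        exact Finset.mem_union_right _ (g ⟨v, h⟩).2
      · have hv' : v ∈ A \ S := Finset.mem_sdiff.2 ⟨hv, h⟩
        rw [hout v hv']
        have := hq.2.1 v hv'
        rw [hAS] at this
        exact Finset.mem_union_left _ this
    · intro v hv
      by_cases h : v ∈ S
      · exact ⟨1, by rw [iterate_one, hp, glue, dif_pos h]; exact (g ⟨v, h⟩).2⟩
      · have hv' : v ∈ A \ S := Finset.mem_sdiff.2 ⟨hv, h⟩
        obtain ⟨k, hk⟩ := hq.2.2 v hv'
        obtain ⟨m, hm⟩ := reach_transfer Finset.sdiff_disjoint hout hq.2.1 k v hv' hk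
        refine ⟨m + 1, ?_⟩
        rw [iterate_succ_apply', hp, glue, dif_pos hm]
        exact (g ⟨_, hm⟩).2
  -- extraction of the set of points mapping directly into R
  have hSp_glue : ∀ (S : Finset V), S ⊆ A →
      ∀ (g : {x : V // x ∈ S} → {x : V // x ∈ R}) (q : V → V), q ∈ Hset (A \ S) S →
      A.filter (fun v => glue S (fun z => (g z : V)) q v ∈ R) = S := by
    intro S hSA g q hq
    ext v
    simp only [Finset.mem_filter]
    constructor
    · rintro ⟨hvA, hvR⟩
      by_contra hvS
      have hv' : v ∈ A \ S := Finset.mem_sdiff.2 ⟨hvA, hvS⟩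
      rw [glue, dif_neg hvS] at hvR
      have h2 := hq.2.1 v hv'
      rw [Finset.sdiff_union_of_subset hSA] at h2
      exact Finset.disjoint_left.1 hd h2 hvR
    · intro hvS
      refine ⟨hSA hvS, ?_⟩
      rw [glue, dif_pos hvS]
      exact (g ⟨v, hvS⟩).2
  let Fib : Idx → Type _ := fun S =>
    ({x : V // x ∈ S.1} → {x : V // x ∈ R}) × ↥(Hset (A \ S.1) S.1)
  let Ψ : (Σ S : Idx, Fib S) → ↥(Hset A R) := fun x =>
    ⟨glue x.1.1 (fun z => (x.2.1 z : V)) (x.2.2 : V → V),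
      hglue_mem x.1.1 x.1.2.1 x.2.1 _ x.2.2.2⟩
  have hΨbij : Function.Bijective Ψ := by
    constructor
    · rintro ⟨⟨S1, hS1⟩, g1, q1⟩ ⟨⟨S2, hS2⟩, g2, q2⟩ h
      have hfun : glue S1 (fun z => (g1 z : V)) (q1 : V → V)
          = glue S2 (fun z => (g2 z : V)) (q2 : V → V) := congrArg Subtype.val h
      have hS : S1 = S2 := by
        rw [← hSp_glue S1 hS1.1 g1 (q1 : V → V) q1.2,
          ← hSp_glue S2 hS2.1 g2 (q2 : V → V) q2.2]
        simp only [hfun]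
      subst hS
      have hg : g1 = g2 := by
        funext z
        have hz := congrFun hfun z.1
        rw [glue, glue, dif_pos z.2, dif_pos z.2] at hz
        exact Subtype.ext (by simpa using hz)
      have hq : q1 = q2 := by
        apply Subtype.ext; funext v
        by_cases hv : v ∈ A \ S1
        · have hz := congrFun hfun v
          rw [glue, glue, dif_neg (Finset.mem_sdiff.1 hv).2,
            dif_neg (Finset.mem_sdiff.1 hv).2] at hz
          exact hz
        · rw [q1.2.1 v hv, q2.2.1 v hv]
      subst hg
      subst hq
      rfl
    · rintro ⟨p, hp⟩
      set S : Finset V := A.filter (fun v => p v ∈ R) with hSdef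
      have hSA : S ⊆ A := Finset.filter_subset _ _
      have hfirst : ∀ k, ∀ v ∈ A, p^[k] v ∈ R → S.Nonempty := by
        intro k
        induction k with
        | zero => intro v hv hr; exact absurd hr (Finset.disjoint_left.1 hd hv)
        | succ k ih =>
          intro v hv hr
          by_cases hpv : p v ∈ R
          · exact ⟨v, Finset.mem_filter.2 ⟨hv, hpv⟩⟩
          · have hpvA : p v ∈ A := by
              rcases Finset.mem_union.1 (hp.2.1 v hv) with h | h
              · exact h
              · exact absurd h hpv
            rw [iterate_succ_apply] at hr
            exact ih (p v) hpvA hr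
      have hSne : S.Nonempty := by
        obtain ⟨v, hv⟩ := hAne
        obtain ⟨k, hk⟩ := hp.2.2 v hv
        exact hfirst k v hv hk
      let g : {x : V // x ∈ S} → {x : V // x ∈ R} :=
        fun z => ⟨p z.1, (Finset.mem_filter.1 z.2).2⟩
      let q : V → V := fun v => if v ∈ A \ S then p v else v
      have hqA : ∀ v ∈ A \ S, p v ∈ A := by
        intro v hv
        have hvA : v ∈ A := (Finset.mem_sdiff.1 hv).1
        have hvS : v ∉ S := (Finset.mem_sdiff.1 hv).2
        have hpv : p v ∉ R := fun hh => hvS (Finset.mem_filter.2 ⟨hvA, hh⟩)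
        rcases Finset.mem_union.1 (hp.2.1 v hvA) with h | h
        · exact h
        · exact absurd h hpv
      have hqmem : q ∈ Hset (A \ S) S := by
        refine ⟨fun v hv => if_neg hv, ?_, ?_⟩
        · intro v hv
          have : q v = p v := if_pos hv
          rw [this, Finset.sdiff_union_of_subset hSA]
          exact hqA v hv
        · have claim : ∀ k, ∀ v ∈ A \ S, p^[k] v ∈ R → ∃ m, q^[m] v ∈ S := by
            intro k
            induction k with
            | zero =>
              intro v hv hr
              exact absurd hr (Finset.disjoint_left.1 hd (Finset.mem_sdiff.1 hv).1)
            | succ k ih =>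
              intro v hv hr
              have hvA : v ∈ A := (Finset.mem_sdiff.1 hv).1
              have hvS : v ∉ S := (Finset.mem_sdiff.1 hv).2
              have hpvA : p v ∈ A := hqA v hv
              have hqv : q v = p v := if_pos hv
              by_cases hpvS : p v ∈ S
              · exact ⟨1, by rw [iterate_one, hqv]; exact hpvS⟩
              · rw [iterate_succ_apply] at hr
                obtain ⟨m, hm⟩ := ih (p v) (Finset.mem_sdiff.2 ⟨hpvA, hpvS⟩) hr
                exact ⟨m + 1, by rw [iterate_succ_apply, hqv]; exact hm⟩
          intro v hv
          obtain ⟨k, hk⟩ := hp.2.2 v (Finset.mem_sdiff.1 hv).1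
          exact claim k v hv hk
      refine ⟨⟨⟨S, hSA, hSne⟩, g, ⟨q, hqmem⟩⟩, ?_⟩
      apply Subtype.ext
      funext v
      show glue S (fun z => (g z : V)) q v = p v
      by_cases hvS : v ∈ S
      · rw [glue, dif_pos hvS]
      · rw [glue, dif_neg hvS]
        by_cases hvAS : v ∈ A \ S
        · exact if_pos hvAS
        · have hvA : v ∉ A := fun hh => hvAS (Finset.mem_sdiff.2 ⟨hh, hvS⟩)
          show (if v ∈ A \ S then p v else v) = p v
          rw [if_neg hvAS, hp.1 v hvA]
  -- now count
  rw [← Nat.card_eq_of_bijective Ψ hΨbij, nat_card_sigma]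
  have hfib : ∀ S : Idx, Nat.card (Fib S) = G A.card R.card S.1.card := by
    rintro ⟨S, hSA, hSne⟩
    have ht0 : S.card ≠ 0 := (Finset.card_pos.2 hSne).ne'
    have hcard1 : Nat.card ({x : V // x ∈ S} → {x : V // x ∈ R}) = R.card ^ S.card := by
      rw [Nat.card_fun, Nat.card_eq_finsetCard, Nat.card_eq_finsetCard]
    show Nat.card (_ × _) = _
    rw [Nat.card_prod, hcard1]
    rcases eq_or_ne S A with rfl | hne
    · rw [Finset.sdiff_self, Hset_card_empty]
      simp [G, ht0]
    · have hss : S ⊂ A := Finset.ssubset_iff_subset_ne.2 ⟨hSA, hne⟩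
      have htlt : S.card < A.card := Finset.card_lt_card hss
      have hASne : (A \ S).Nonempty := by
        rw [← Finset.card_pos, Finset.card_sdiff_of_subset hSA]
        omega
      have hIH := IH (A \ S).card (by rw [Finset.card_sdiff_of_subset hSA]; omega)
        (A \ S) S rfl Finset.sdiff_disjoint hASne hSne
      rw [hIH, Finset.card_sdiff_of_subset hSA, Nat.sub_add_cancel (Finset.card_le_card hSA)]
      simp only [G, if_neg ht0, if_neg (by omega : S.card ≠ A.card)]
      rw [show A.card - 1 - S.card = A.card - S.card - 1 by omega]
  rw [Finset.sum_congr rfl (fun S _ => hfib S)]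
  have hsub : ∀ S : Finset V, S ∈ A.powerset.filter (fun S => S.Nonempty) ↔
      (S ⊆ A ∧ S.Nonempty) := by
    intro S
    simp [Finset.mem_filter, Finset.mem_powerset]
  rw [← Finset.sum_subtype (A.powerset.filter fun S => S.Nonempty) hsub
    (fun S => G A.card R.card S.card)]
  rw [Finset.sum_filter]
  have hcongr : ∀ S ∈ A.powerset,
      (if S.Nonempty then G A.card R.card S.card else 0) = G A.card R.card S.card := by
    intro S _
    by_cases h : S.Nonempty
    · rw [if_pos h]
    · rw [if_neg h, Finset.not_nonempty_iff_eq_empty.1 h]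
      simp [G]
  rw [Finset.sum_congr rfl hcongr, Finset.sum_powerset_apply_card (G A.card R.card)]
  simp only [smul_eq_mul]
  rw [key_id _ _ (by have := Finset.card_pos.2 hAne; omega)]


open scoped Classical in
noncomputable def cyc (f : V → V) : Finset V :=
  Finset.univ.filter (fun v => ∃ m > 0, f^[m] v = v)

lemma mem_cyc {f : V → V} {v : V} : v ∈ cyc f ↔ v ∈ periodicPts f := by
  simp [cyc, Function.mem_periodicPts, Function.IsPeriodicPt, Function.IsFixedPt]

lemma cyc_card (f : V → V) :
    Nat.card {v : V // ∃ m > 0, f^[m] v = v} = (cyc f).card := by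
  classical
  rw [← Nat.card_eq_finsetCard (cyc f)]
  apply Nat.card_congr
  apply Equiv.subtypeEquivRight
  intro v
  simp [cyc]

lemma exists_iterate_mem_periodicPts (f : V → V) (v : V) :
    ∃ m, f^[m] v ∈ periodicPts f := by
  obtain ⟨a, b, hab, heq⟩ := Finite.exists_ne_map_eq_of_infinite (fun k : ℕ => f^[k] v)
  wlog h : a < b generalizing a b
  · exact this b a hab.symm heq.symm (by omega)
  refine ⟨a, Function.mk_mem_periodicPts (n := b - a) (by omega) ?_⟩
  show f^[b - a] (f^[a] v) = f^[a] v
  rw [← iterate_add_apply, Nat.sub_add_cancel h.le]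
  exact heq.symm

lemma cyc_fiber_card (C : Finset V) :
    Nat.card {f : V → V // cyc f = C} = Nat.factorial C.card * Nat.card (Hset Cᶜ C) := by
  classical
  have hmaps : ∀ (f : V → V), cyc f = C → ∀ v ∈ C, f v ∈ C := by
    intro f hf v hv
    rw [← hf, mem_cyc] at hv ⊢
    exact (Function.bijOn_periodicPts f).mapsTo hv
  have hinj : ∀ (f : V → V), cyc f = C → ∀ v ∈ C, ∀ w ∈ C, f v = f w → v = w := by
    intro f hf v hv w hw hvw
    rw [← hf, mem_cyc] at hv hw
    exact (Function.bijOn_periodicPts f).injOn hv hw hvw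
  have huniv : Cᶜ ∪ C = Finset.univ := by
    ext w; simp [Finset.mem_union, Finset.mem_compl]; tauto
  have hFmem : ∀ (f : V → V), cyc f = C →
      (fun v => if v ∈ C then v else f v) ∈ Hset Cᶜ C := by
    intro f hf
    refine ⟨?_, ?_, ?_⟩
    · intro v hv
      have : v ∈ C := by
        by_contra h
        exact hv (Finset.mem_compl.2 h)
      simp [this]
    · intro v hv
      rw [huniv]
      exact Finset.mem_univ _
    · intro v hv
      have hvC : v ∉ C := Finset.mem_compl.1 hv
      obtain ⟨m, hm⟩ := exists_iterate_mem_periodicPts f v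
      have hmC : f^[m] v ∈ C := by rw [← hf, mem_cyc]; exact hm
      refine reach_transfer disjoint_compl_left
        (fun w hw => if_neg (Finset.mem_compl.1 hw))
        (fun w hw => by rw [huniv]; exact Finset.mem_univ _) m v hv hmC
  have hGmem : ∀ (σ : Equiv.Perm {x : V // x ∈ C}) (p : V → V), p ∈ Hset Cᶜ C →
      cyc (fun v => if h : v ∈ C then (σ ⟨v, h⟩ : V) else p v) = C := by
    intro σ p hp
    set g : V → V := fun v => if h : v ∈ C then (σ ⟨v, h⟩ : V) else p v with hgdef
    have hgC : ∀ (v) (h : v ∈ C), g v = (σ ⟨v, h⟩ : V) := fun v h => dif_pos h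
    have hCinv : ∀ v ∈ C, g v ∈ C := fun v h => by rw [hgC v h]; exact (σ ⟨v, h⟩).2
    have hiter : ∀ (m) (z : {x : V // x ∈ C}), g^[m] z.1 = ((σ ^ m) z : V) := by
      intro m
      induction m with
      | zero => intro z; simp
      | succ m ih =>
        intro z
        rw [iterate_succ_apply, hgC z.1 z.2]
        rw [show (⟨z.1, z.2⟩ : {x : V // x ∈ C}) = z from rfl]
        rw [ih (σ z), pow_succ]
        rfl
    ext v
    rw [mem_cyc]
    constructor
    · intro hv
      by_contra hvC
      obtain ⟨k, hk⟩ := hp.2.2 v (Finset.mem_compl.2 hvC)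
      have hgOut : ∀ w ∈ Cᶜ, g w = p w := fun w hw => dif_neg (Finset.mem_compl.1 hw)
      have hpU : ∀ w ∈ Cᶜ, p w ∈ Cᶜ ∪ C := fun w hw => by
        rw [huniv]; exact Finset.mem_univ _
      obtain ⟨m, hm⟩ := reach_transfer disjoint_compl_left hgOut hpU
        k v (Finset.mem_compl.2 hvC) hk
      have hinv : ∀ j, g^[m + j] v ∈ C := by
        intro j
        induction j with
        | zero => simpa using hm
        | succ j ihj =>
          rw [show m + (j + 1) = (m + j) + 1 by omega, iterate_succ_apply']
          exact hCinv _ ihj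
      obtain ⟨q, hq0, hqv⟩ := Function.mem_periodicPts.1 hv
      have hqm : g^[q * m] v = v := by
        rw [iterate_mul]
        exact Function.IsFixedPt.iterate hqv m
      have hle : m ≤ q * m := Nat.le_mul_of_pos_left m hq0
      have hfin : g^[m + (q * m - m)] v ∈ C := hinv _
      rw [show m + (q * m - m) = q * m by omega, hqm] at hfin
      exact hvC hfin
    · intro hv
      refine Function.mk_mem_periodicPts (n := orderOf σ) (orderOf_pos σ) ?_
      show g^[orderOf σ] v = v
      rw [show v = (⟨v, hv⟩ : {x : V // x ∈ C}).1 from rfl, hiter (orderOf σ) ⟨v, hv⟩,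
        pow_orderOf_eq_one σ]
      rfl
  let e : {f : V → V // cyc f = C} ≃ (Equiv.Perm {x : V // x ∈ C} × ↥(Hset Cᶜ C)) :=
    { toFun := fun f =>
        (Equiv.ofBijective (fun z => ⟨f.1 z.1, hmaps f.1 f.2 z.1 z.2⟩)
          (Finite.injective_iff_bijective.1 (fun z w h => Subtype.ext
            (hinj f.1 f.2 z.1 z.2 w.1 w.2 (congrArg Subtype.val h)))),
          ⟨fun v => if v ∈ C then v else f.1 v, hFmem f.1 f.2⟩)
      invFun := fun x =>
        ⟨fun v => if h : v ∈ C then (x.1 ⟨v, h⟩ : V) else (x.2 : V → V) v,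
          hGmem x.1 (x.2 : V → V) x.2.2⟩
      left_inv := by
        rintro ⟨f, hf⟩
        apply Subtype.ext
        funext v
        show (if h : v ∈ C then _ else _) = f v
        by_cases h : v ∈ C
        · rw [dif_pos h]; rfl
        · rw [dif_neg h]
          show (if v ∈ C then v else f v) = f v
          rw [if_neg h]
      right_inv := by
        rintro ⟨σ, p, hp⟩
        refine Prod.ext ?_ ?_
        · apply Equiv.ext
          intro z
          apply Subtype.ext
          show (if h : z.1 ∈ C then ((σ ⟨z.1, h⟩ : V)) else p z.1) = (σ z : V)
          rw [dif_pos z.2]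
        · apply Subtype.ext
          funext v
          show (if v ∈ C then v else (if h : v ∈ C then (σ ⟨v, h⟩ : V) else p v)) = p v
          by_cases h : v ∈ C
          · rw [if_pos h]
            exact (hp.1 v (by simp [Finset.mem_compl, h])).symm
          · rw [if_neg h, dif_neg h] }
  rw [Nat.card_congr e, Nat.card_prod]
  congr 1
  rw [Nat.card_eq_fintype_card, Fintype.card_perm, Fintype.card_coe]

theorem main_count (n i : ℕ) (hi : 1 ≤ i) (hin : i ≤ n) :
    Nat.card {r : Fin n → Fin n // Nat.card {v : Fin n // ∃ m > 0, r^[m] v = v} = i}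
      = n.choose i * (i.factorial * (if i = n then 1 else i * n ^ (n - 1 - i))) := by
  classical
  let E : {r : Fin n → Fin n // Nat.card {v : Fin n // ∃ m > 0, r^[m] v = v} = i} ≃
      Σ C : {C : Finset (Fin n) // C.card = i}, {r : Fin n → Fin n // cyc r = C.1} :=
    { toFun := fun r => ⟨⟨cyc r.1, by rw [← cyc_card]; exact r.2⟩, ⟨r.1, rfl⟩⟩
      invFun := fun x => ⟨x.2.1, by rw [cyc_card, x.2.2]; exact x.1.2⟩
      left_inv := fun r => rfl
      right_inv := by
        rintro ⟨⟨C, hC⟩, r, hr⟩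
        have hr2 : cyc r = C := hr
        cases hr2
        rfl }
  rw [Nat.card_congr E, nat_card_sigma]
  have hval : ∀ C : {C : Finset (Fin n) // C.card = i},
      Nat.card {r : Fin n → Fin n // cyc r = C.1}
        = i.factorial * (if i = n then 1 else i * n ^ (n - 1 - i)) := by
    rintro ⟨C, hC⟩
    dsimp only
    rw [cyc_fiber_card, hC]
    congr 1
    rcases eq_or_ne i n with rfl | hne
    · have hCu : C = Finset.univ := Finset.eq_univ_of_card C (by rw [hC, Fintype.card_fin])
      rw [hCu, Finset.compl_univ, Hset_card_empty, if_pos rfl]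
    · have hCco : Cᶜ.card = n - i := by rw [Finset.card_compl, Fintype.card_fin, hC]
      have hCne : Cᶜ.Nonempty := by rw [← Finset.card_pos, hCco]; omega
      have hCne' : C.Nonempty := by rw [← Finset.card_pos, hC]; omega
      rw [Hset_card Cᶜ.card Cᶜ C rfl disjoint_compl_left hCne hCne', hCco, hC,
        Nat.sub_add_cancel hin, if_neg hne,
        show n - i - 1 = n - 1 - i by omega]
  rw [Finset.sum_congr rfl (fun C _ => hval C), Finset.sum_const, smul_eq_mul]
  congr 1
  rw [Finset.card_univ, Fintype.card_finset_len, Fintype.card_fin]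

end Stmt4Aux

theorem stmt_4 (n i : ℕ) (hi : 1 ≤ i) (hin : i ≤ n) :
    (Nat.card {r : Fin n → Fin n //
        Nat.card {v : Fin n // ∃ m > 0, r^[m] v = v} = i} : ℚ) =
      (i : ℚ) * (n : ℚ) ^ ((n : ℤ) - 1 - (i : ℤ)) * (Nat.factorial n : ℚ) /
        (Nat.factorial (n - i) : ℚ) := by
  have hn : 1 ≤ n := le_trans hi hin
  have hn0 : (n : ℚ) ≠ 0 := Nat.cast_ne_zero.2 (by omega)
  have hfact : (n.choose i * i.factorial * (n - i).factorial : ℚ) = n.factorial := by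
    exact_mod_cast congrArg (Nat.cast : ℕ → ℚ) (Nat.choose_mul_factorial_mul_factorial hin)
  have h1 : ((n - i).factorial : ℚ) ≠ 0 := Nat.cast_ne_zero.2 (Nat.factorial_ne_zero _)
  rw [Stmt4Aux.main_count n i hi hin]
  rcases eq_or_ne i n with rfl | hne
  · rw [if_pos rfl]
    rw [show (i : ℤ) - 1 - (i : ℤ) = -1 by ring, zpow_neg_one]
    simp only [Nat.choose_self, Nat.sub_self, Nat.factorial_zero, Nat.cast_one, one_mul, mul_one]
    push_cast
    field_simp
  · have hilt : i < n := lt_of_le_of_ne hin hne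
    rw [if_neg hne]
    have hzp : (n : ℚ) ^ ((n : ℤ) - 1 - (i : ℤ)) = (n : ℚ) ^ ((n - 1 - i : ℕ)) := by
      rw [← zpow_natCast]
      congr 1
      omega
    rw [hzp]
    push_cast
    field_simp
    linear_combination hfact
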